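/- For any strongly connected digraph G, the overall fixation probability f_{G,r} = (1/|V|)·Σ_{v∈V} f_{G,r}({v}) is monotone non-decreasing in the mutant fitness r: if 0 < r ≤ r′ then f_{G,r} ≤ f_{G,r′}. -/

import Mathlib

open Finset

/-- One-step transition probability of the Moran process with mutant fitness
`r` on the digraph `E`: a vertex `u` is chosen proportionally to its fitness,
then a uniformly random out-neighbour `v` of `u` is replaced by a copy of `u`. -/
noncomputable def moranP {V : Type*} [Fintype V] [DecidableEq V]
    (E : V → V → Prop) [DecidableRel E] (r : ℝ) (S S' : Finset V) : ℝ :=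
  ∑ u : V, ∑ v ∈ univ.filter (fun v => E u v),
    if S' = (if u ∈ S then insert v S else S.erase v) then
      (if u ∈ S then r else 1) /
        (((Fintype.card V : ℝ) + (r - 1) * S.card) *
          ((univ.filter (fun w => E u w)).card : ℝ))
    else 0

/-- Minimum principle for superharmonic functions of a finite Markov kernel. -/
lemma minprin {X : Type*} [Fintype X] (Q : X → X → ℝ)
    (hQ0 : ∀ x y, 0 ≤ Q x y) (hQ1 : ∀ x, ∑ y : X, Q x y = 1)
    (h : X → ℝ) (hsup : ∀ x, ∑ y : X, Q x y * h y ≤ h x)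
    (D : X → Prop) (hD : ∀ x, D x → 0 ≤ h x)
    (hre : ∀ x, ∃ y, D y ∧ Relation.ReflTransGen (fun a b => 0 < Q a b) x y) :
    ∀ x, 0 ≤ h x := by
  intro x₀
  obtain ⟨z, _, hz⟩ := Finset.exists_min_image (univ : Finset X) h ⟨x₀, mem_univ _⟩
  have hm : ∀ x, h z ≤ h x := fun x => hz x (mem_univ x)
  have step : ∀ x y, h x = h z → 0 < Q x y → h y = h z := by
    intro x y hx hxy
    by_contra hne
    have hylt : h z < h y := lt_of_le_of_ne (hm y) (Ne.symm hne)
    have h1 : ∑ w : X, Q x w * h z < ∑ w : X, Q x w * h w := by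
      apply Finset.sum_lt_sum
      · intro i _; exact mul_le_mul_of_nonneg_left (hm i) (hQ0 x i)
      · exact ⟨y, mem_univ y, by nlinarith⟩
    have h2 : ∑ w : X, Q x w * h z = h z := by
      rw [← Finset.sum_mul, hQ1, one_mul]
    have := hsup x
    rw [hx] at this
    linarith
  have inv : ∀ y, Relation.ReflTransGen (fun a b => 0 < Q a b) z y → h y = h z := by
    intro y hy
    induction hy with
    | refl => rfl
    | tail _ e ih => exact step _ _ ih e
  obtain ⟨y, hyD, hyz⟩ := hre z
  have hy := inv y hyz
  have := hD y hyD
  linarith [hm x₀]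

namespace MoranAux

variable {V : Type*} [Fintype V] [DecidableEq V] (E : V → V → Prop) [DecidableRel E]

/-- out-neighbourhood -/
def N (u : V) : Finset V := univ.filter (fun v => E u v)

/-- replacement move -/
def move (u v : V) (S : Finset V) : Finset V := if u ∈ S then insert v S else S.erase v

noncomputable def fit (r : ℝ) (S : Finset V) (u : V) : ℝ := if u ∈ S then r else 1

noncomputable def W (r : ℝ) (S : Finset V) : ℝ :=
  (Fintype.card V : ℝ) + (r - 1) * S.card

/-- one-step expectation operator -/
noncomputable def Pex (r : ℝ) (A : Finset V) (h : Finset V → ℝ) : ℝ :=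
  ∑ u : V, ∑ v ∈ N E u, fit r A u / (W r A * (N E u).card) * h (move u v A)

variable {E}

lemma expval (r : ℝ) (A : Finset V) (h : Finset V → ℝ) :
    ∑ B : Finset V, moranP E r A B * h B = Pex E r A h := by
  simp only [moranP, Pex, Finset.sum_mul, ite_mul, zero_mul]
  rw [Finset.sum_comm]
  refine Finset.sum_congr rfl (fun u _ => ?_)
  rw [Finset.sum_comm]
  refine Finset.sum_congr rfl (fun v _ => ?_)
  rw [Finset.sum_ite_eq' univ]
  simp [N, move, fit, W]

section Facts
variable [Nonempty V]

lemma npos : (0:ℝ) < (Fintype.card V : ℝ) := by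
  exact_mod_cast Fintype.card_pos

lemma fit_pos {r : ℝ} (hr : 0 < r) (S : Finset V) (u : V) : 0 < fit r S u := by
  unfold fit; split <;> norm_num [hr]

lemma fit_le_lam {r : ℝ} (S : Finset V) (u : V) : fit r S u ≤ max r 1 := by
  unfold fit; split
  · exact le_max_left _ _
  · exact le_max_right _ _

lemma W_eq_sum (r : ℝ) (S : Finset V) : W r S = ∑ u : V, fit r S u := by
  unfold W fit
  have : ∀ u : V, (if u ∈ S then r else (1:ℝ)) = 1 + (if u ∈ S then r - 1 else 0) := by
    intro u; split <;> ring
  rw [Finset.sum_congr rfl (fun u _ => this u)]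
  rw [Finset.sum_add_distrib, Finset.sum_const, Finset.sum_ite_mem, univ_inter,
    Finset.sum_const]
  simp [mul_comm]

lemma card_le_n (S : Finset V) : (S.card : ℝ) ≤ (Fintype.card V : ℝ) := by
  exact_mod_cast Finset.card_le_card (Finset.subset_univ S)

lemma W_pos {r : ℝ} (hr : 0 < r) (S : Finset V) : 0 < W r S := by
  unfold W
  have h1 := card_le_n S
  have h2 : (0:ℝ) ≤ (S.card : ℝ) := by positivity
  have h3 := npos (V := V)
  rcases le_or_gt r 1 with h | h
  · nlinarith [mul_nonneg hr.le (sub_nonneg.2 h1)]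
  · nlinarith

variable (hE : ∀ u : V, ∃ v, E u v)
include hE

lemma dpos (u : V) : (0:ℝ) < ((N E u).card : ℝ) := by
  obtain ⟨v, hv⟩ := hE u
  have : v ∈ N E u := by simp [N, hv]
  exact_mod_cast Finset.card_pos.2 ⟨v, this⟩

lemma rowsum {r : ℝ} (hr : 0 < r) (A : Finset V) :
    Pex E r A (fun _ => 1) = 1 := by
  unfold Pex
  have : ∀ u : V, ∑ v ∈ N E u, fit r A u / (W r A * (N E u).card) * 1
      = fit r A u / W r A := by
    intro u
    rw [Finset.sum_const]
    have hd := dpos hE u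
    have hW := W_pos hr A
    rw [nsmul_eq_mul]
    field_simp
  rw [Finset.sum_congr rfl (fun u _ => this u), ← Finset.sum_div, ← W_eq_sum,
    div_self (ne_of_gt (W_pos hr A))]

end Facts

section Facts2
variable [Nonempty V]

lemma move_empty (u v : V) : move u v (∅ : Finset V) = ∅ := by
  simp [move]

lemma move_univ (u v : V) : move u v (univ : Finset V) = univ := by
  simp [move]

variable (hE : ∀ u : V, ∃ v, E u v)
include hE

lemma harm_all {r : ℝ} (hr : 0 < r) (f : Finset V → ℝ)
    (hf1 : f univ = 1) (hf0 : f ∅ = 0)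
    (hfrec : ∀ A : Finset V, A ≠ ∅ → A ≠ univ →
      f A = ∑ B : Finset V, moranP E r A B * f B) :
    ∀ A, Pex E r A f = f A := by
  intro A
  by_cases h0 : A = ∅
  · subst h0
    simp [Pex, move_empty, hf0]
  by_cases h1 : A = univ
  · subst h1
    have h2 : Pex E r univ f = Pex E r univ (fun _ => 1) := by
      simp only [Pex, move_univ, hf1]
    rw [h2, rowsum hE hr, hf1]
  · rw [← expval r A f]
    exact (hfrec A h0 h1).symm

omit hE

lemma moranP_nonneg {r : ℝ} (hr : 0 < r) (A B : Finset V) : 0 ≤ moranP E r A B := by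
  apply Finset.sum_nonneg; intro u _
  apply Finset.sum_nonneg; intro v _
  have hW : (0:ℝ) ≤ ((Fintype.card V : ℝ) + (r - 1) * A.card) *
      ((univ.filter (fun w => E u w)).card : ℝ) := by
    have h1 := W_pos hr A
    unfold W at h1
    positivity
  by_cases hu : u ∈ A
  · simp only [if_pos hu]
    split
    · exact div_nonneg hr.le hW
    · exact le_refl 0
  · simp only [if_neg hu]
    split
    · exact div_nonneg zero_le_one hW
    · exact le_refl 0

lemma moranP_pos {r : ℝ} (hr : 0 < r) {A : Finset V} {u v : V}
    (hu : u ∈ A) (he : E u v) : 0 < moranP E r A (insert v A) := by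
  have hterm : ∀ (u' : V), (0:ℝ) ≤ ∑ v' ∈ univ.filter (fun v'' => E u' v''),
      (if insert v A = (if u' ∈ A then insert v' A else A.erase v') then
        (if u' ∈ A then r else 1) /
          (((Fintype.card V : ℝ) + (r - 1) * A.card) *
            ((univ.filter (fun w => E u' w)).card : ℝ))
      else 0) := by
    intro u'
    apply Finset.sum_nonneg; intro v' _
    have hW : (0:ℝ) ≤ ((Fintype.card V : ℝ) + (r - 1) * A.card) *
        ((univ.filter (fun w => E u' w)).card : ℝ) := by
      have h1 := W_pos hr A
      unfold W at h1
      positivity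
    by_cases hu' : u' ∈ A
    · simp only [if_pos hu']
      split
      · exact div_nonneg hr.le hW
      · exact le_refl 0
    · simp only [if_neg hu']
      split
      · exact div_nonneg zero_le_one hW
      · exact le_refl 0
  unfold moranP
  apply Finset.sum_pos' (fun u' _ => hterm u')
  refine ⟨u, mem_univ u, ?_⟩
  apply Finset.sum_pos' 
  · intro v' _
    have h0 := hterm u
    -- termwise nonneg again
    have hW : (0:ℝ) ≤ ((Fintype.card V : ℝ) + (r - 1) * A.card) *
        ((univ.filter (fun w => E u w)).card : ℝ) := by
      have h1 := W_pos hr A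
      unfold W at h1
      positivity
    simp only [if_pos hu]
    split
    · exact div_nonneg hr.le hW
    · exact le_refl 0
  · refine ⟨v, by simp [he], ?_⟩
    simp only [if_pos hu, if_pos rfl]
    apply div_pos hr
    apply mul_pos
    · have h1 := W_pos hr A
      unfold W at h1
      exact h1
    · have hv : v ∈ univ.filter (fun w => E u w) := by simp [he]
      exact_mod_cast Finset.card_pos.2 ⟨v, hv⟩

lemma cross (hstrong : ∀ u v : V, Relation.ReflTransGen E u v)
    {A : Finset V} (hne : A.Nonempty) (hnu : A ≠ univ) :
    ∃ u ∈ A, ∃ v, v ∉ A ∧ E u v := by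
  obtain ⟨a, ha⟩ := hne
  obtain ⟨b, hb⟩ : ∃ b, b ∉ A := by
    by_contra h
    push_neg at h
    exact hnu (Finset.eq_univ_iff_forall.2 h)
  have H : ∀ x y : V, Relation.ReflTransGen E x y → x ∈ A → y ∉ A →
      ∃ u ∈ A, ∃ v, v ∉ A ∧ E u v := by
    intro x y hxy
    induction hxy with
    | refl => intro hx hy; exact absurd hx hy
    | @tail b c hxb hbc ih =>
      intro hx hy
      by_cases hbA : b ∈ A
      · exact ⟨b, hbA, c, hy, hbc⟩
      · exact ih hx hbA
  exact H a b (hstrong a b) ha hb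

lemma reach_univ (hstrong : ∀ u v : V, Relation.ReflTransGen E u v)
    {r : ℝ} (hr : 0 < r) :
    ∀ A : Finset V, A.Nonempty →
      Relation.ReflTransGen (fun S T => 0 < moranP E r S T) A univ := by
  have key : ∀ k : ℕ, ∀ A : Finset V, A.Nonempty → Aᶜ.card ≤ k →
      Relation.ReflTransGen (fun S T => 0 < moranP E r S T) A univ := by
    intro k
    induction k with
    | zero =>
      intro A _ hc
      have : Aᶜ = ∅ := Finset.card_eq_zero.1 (Nat.le_zero.1 hc)
      have : A = univ := by
        rwa [Finset.compl_eq_empty_iff] at this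
      rw [this]
    | succ k ih =>
      intro A hA hc
      by_cases h1 : A = univ
      · rw [h1]
      obtain ⟨u, hu, v, hv, he⟩ := cross hstrong hA h1
      have hstep : 0 < moranP E r A (insert v A) := moranP_pos hr hu he
      have hss : (insert v A)ᶜ ⊂ Aᶜ := by
        apply Finset.ssubset_iff_of_subset (Finset.compl_subset_compl.2
          (Finset.subset_insert v A)) |>.2
        exact ⟨v, by simp [hv], by simp⟩
      have hcard : (insert v A)ᶜ.card ≤ k := by
        have := Finset.card_lt_card hss
        omega
      exact Relation.ReflTransGen.head hstep
        (ih (insert v A) ⟨v, Finset.mem_insert_self v A⟩ hcard)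
  exact fun A hA => key Aᶜ.card A hA le_rfl

end Facts2

section Bounds
variable [Nonempty V]
variable (hE : ∀ u : V, ∃ v, E u v)
include hE

lemma Qrow {r : ℝ} (hr : 0 < r) (A : Finset V) :
    ∑ B : Finset V, moranP E r A B = 1 := by
  have h := expval (E := E) r A (fun _ => (1:ℝ))
  simp only [mul_one] at h
  rw [h]
  exact rowsum hE hr A

variable (hstrong : ∀ u v : V, Relation.ReflTransGen E u v)
include hstrong

lemma f_nonneg {r : ℝ} (hr : 0 < r) (f : Finset V → ℝ)
    (hf1 : f univ = 1) (hf0 : f ∅ = 0)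
    (hfrec : ∀ A : Finset V, A ≠ ∅ → A ≠ univ →
      f A = ∑ B : Finset V, moranP E r A B * f B) :
    ∀ A, 0 ≤ f A := by
  apply minprin (fun A B => moranP E r A B) (fun A B => moranP_nonneg hr A B)
    (Qrow hE hr) f
    (fun A => le_of_eq (by rw [expval]; exact harm_all hE hr f hf1 hf0 hfrec A))
    (fun A => A = ∅ ∨ A = univ)
  · rintro A (rfl | rfl)
    · rw [hf0]
    · rw [hf1]; norm_num
  · intro A
    by_cases hA : A = ∅
    · exact ⟨∅, Or.inl rfl, by rw [hA]⟩
    · exact ⟨univ, Or.inr rfl,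
        reach_univ hstrong hr A (Finset.nonempty_iff_ne_empty.2 hA)⟩

lemma f_le_one {r : ℝ} (hr : 0 < r) (f : Finset V → ℝ)
    (hf1 : f univ = 1) (hf0 : f ∅ = 0)
    (hfrec : ∀ A : Finset V, A ≠ ∅ → A ≠ univ →
      f A = ∑ B : Finset V, moranP E r A B * f B) :
    ∀ A, f A ≤ 1 := by
  have h := minprin (fun A B => moranP E r A B) (fun A B => moranP_nonneg hr A B)
    (Qrow hE hr) (fun A => 1 - f A)
    (fun A => le_of_eq (by
      simp only [mul_sub, mul_one, Finset.sum_sub_distrib]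
      rw [Qrow hE hr, expval, harm_all hE hr f hf1 hf0 hfrec A]))
    (fun A => A = ∅ ∨ A = univ)
    (by rintro A (rfl | rfl)
        · simp [hf0]
        · simp [hf1])
    (by intro A
        by_cases hA : A = ∅
        · exact ⟨∅, Or.inl rfl, by rw [hA]⟩
        · exact ⟨univ, Or.inr rfl,
            reach_univ hstrong hr A (Finset.nonempty_iff_ne_empty.2 hA)⟩)
  intro A
  have hA : 0 ≤ 1 - f A := h A
  linarith

end Bounds

section Pair
variable [Nonempty V]

/-- normalizing fitness bound -/
noncomputable def lam (r : ℝ) : ℝ := max r 1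

lemma lam_pos {r : ℝ} (hr : 0 < r) : 0 < lam r := lt_of_lt_of_le one_pos (le_max_right r 1)

/-- indicator -/
noncomputable def ind (t q : Finset V × Finset V) : ℝ := if q = t then 1 else 0

lemma ind_nonneg (t q : Finset V × Finset V) : 0 ≤ ind t q := by
  unfold ind; split <;> norm_num

/-- coupled both-move target -/
def tBoth (u v : V) (p : Finset V × Finset V) : Finset V × Finset V :=
  (move u v p.1, move u v p.2)

/-- extra-move target -/
noncomputable def tExtra (r : ℝ) (u v : V) (p : Finset V × Finset V) :
    Finset V × Finset V :=
  if fit r p.1 u ≤ fit r p.2 u then (p.1, move u v p.2) else (move u v p.1, p.2)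

variable (E)

/-- the coupled pair kernel -/
noncomputable def Qp (r : ℝ) (p q : Finset V × Finset V) : ℝ :=
  if p.1 ⊆ p.2 then
    ∑ u : V,
      (min (fit r p.1 u) (fit r p.2 u) /
          (lam r * (Fintype.card V : ℝ) * ((N E u).card : ℝ)) *
          ∑ v ∈ N E u, ind (tBoth u v p) q
        + |fit r p.1 u - fit r p.2 u| /
          (lam r * (Fintype.card V : ℝ) * ((N E u).card : ℝ)) *
          ∑ v ∈ N E u, ind (tExtra r u v p) q
        + (lam r - max (fit r p.1 u) (fit r p.2 u)) /
          (lam r * (Fintype.card V : ℝ)) * ind p q)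
  else ind p q

variable {E}

lemma Qp_nonneg {r : ℝ} (hr : 0 < r) (p q : Finset V × Finset V) :
    0 ≤ Qp E r p q := by
  unfold Qp
  split
  · apply Finset.sum_nonneg; intro u _
    have h1 : (0:ℝ) ≤ min (fit r p.1 u) (fit r p.2 u) :=
      le_min (fit_pos hr p.1 u).le (fit_pos hr p.2 u).le
    have h2 : (0:ℝ) ≤ lam r * (Fintype.card V : ℝ) * ((N E u).card : ℝ) := by
      have := lam_pos hr
      positivity
    have h3 : (0:ℝ) ≤ lam r * (Fintype.card V : ℝ) := by
      have := lam_pos hr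
      positivity
    have h4 : (0:ℝ) ≤ lam r - max (fit r p.1 u) (fit r p.2 u) :=
      sub_nonneg.2 (max_le (fit_le_lam p.1 u) (fit_le_lam p.2 u))
    have h5 : (0:ℝ) ≤ ∑ v ∈ N E u, ind (tBoth u v p) q :=
      Finset.sum_nonneg fun v _ => ind_nonneg _ _
    have h6 : (0:ℝ) ≤ ∑ v ∈ N E u, ind (tExtra r u v p) q :=
      Finset.sum_nonneg fun v _ => ind_nonneg _ _
    have h7 := ind_nonneg p q
    positivity
  · exact ind_nonneg p q

/-- collapse an indicator sum against a test function -/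
lemma collapse (c : ℝ) (s : Finset V) (t : V → Finset V × Finset V)
    (F : Finset V × Finset V → ℝ) :
    ∑ q : Finset V × Finset V, c * (∑ v ∈ s, ind (t v) q) * F q
      = c * ∑ v ∈ s, F (t v) := by
  simp only [mul_assoc]
  rw [← Finset.mul_sum]
  congr 1
  simp only [Finset.sum_mul]
  rw [Finset.sum_comm]
  refine Finset.sum_congr rfl fun v _ => ?_
  simp [ind, ite_mul, one_mul, zero_mul, Finset.sum_ite_eq']

lemma collapse1 (c : ℝ) (t : Finset V × Finset V)
    (F : Finset V × Finset V → ℝ) :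
    ∑ q : Finset V × Finset V, c * ind t q * F q = c * F t := by
  simp only [mul_assoc]
  rw [← Finset.mul_sum]
  congr 1
  simp [ind, ite_mul, one_mul, zero_mul, Finset.sum_ite_eq']

/-- expansion of `∑ q, Qp r p q * F q` when `p.1 ⊆ p.2` -/
lemma Qp_expand {r : ℝ} {p : Finset V × Finset V} (hsub : p.1 ⊆ p.2)
    (F : Finset V × Finset V → ℝ) :
    ∑ q : Finset V × Finset V, Qp E r p q * F q
      = ∑ u : V,
        (min (fit r p.1 u) (fit r p.2 u) /
            (lam r * (Fintype.card V : ℝ) * ((N E u).card : ℝ)) *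
            ∑ v ∈ N E u, F (tBoth u v p)
          + |fit r p.1 u - fit r p.2 u| /
            (lam r * (Fintype.card V : ℝ) * ((N E u).card : ℝ)) *
            ∑ v ∈ N E u, F (tExtra r u v p)
          + (lam r - max (fit r p.1 u) (fit r p.2 u)) /
            (lam r * (Fintype.card V : ℝ)) * F p) := by
  have step1 : ∑ q : Finset V × Finset V, Qp E r p q * F q
      = ∑ q : Finset V × Finset V, ∑ u : V,
        (min (fit r p.1 u) (fit r p.2 u) /
            (lam r * (Fintype.card V : ℝ) * ((N E u).card : ℝ)) *
            (∑ v ∈ N E u, ind (tBoth u v p) q) * F q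
          + |fit r p.1 u - fit r p.2 u| /
            (lam r * (Fintype.card V : ℝ) * ((N E u).card : ℝ)) *
            (∑ v ∈ N E u, ind (tExtra r u v p) q) * F q
          + (lam r - max (fit r p.1 u) (fit r p.2 u)) /
            (lam r * (Fintype.card V : ℝ)) * ind p q * F q) := by
    refine Finset.sum_congr rfl fun q _ => ?_
    unfold Qp
    rw [if_pos hsub, Finset.sum_mul]
    refine Finset.sum_congr rfl fun u _ => ?_
    ring
  rw [step1, Finset.sum_comm]
  refine Finset.sum_congr rfl fun u _ => ?_
  rw [Finset.sum_add_distrib, Finset.sum_add_distrib, collapse, collapse, collapse1]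

end Pair

section Pair2
variable [Nonempty V]

lemma move_subset {A B : Finset V} (h : A ⊆ B) (u v : V) :
    move u v A ⊆ move u v B := by
  unfold move
  by_cases hu : u ∈ A
  · rw [if_pos hu, if_pos (h hu)]
    exact Finset.insert_subset_insert _ h
  · rw [if_neg hu]
    by_cases hu2 : u ∈ B
    · rw [if_pos hu2]
      exact (Finset.erase_subset v A).trans (h.trans (Finset.subset_insert v B))
    · rw [if_neg hu2]
      exact Finset.erase_subset_erase v h

lemma Qp_row (hE : ∀ u : V, ∃ v, E u v) {r : ℝ} (hr : 0 < r)
    (p : Finset V × Finset V) :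
    ∑ q : Finset V × Finset V, Qp E r p q = 1 := by
  by_cases hsub : p.1 ⊆ p.2
  · have h := Qp_expand (E := E) (r := r) hsub (fun _ => (1:ℝ))
    simp only [mul_one] at h
    rw [h]
    have hn : (0:ℝ) < (Fintype.card V : ℝ) := npos
    have hl : (0:ℝ) < lam r := lam_pos hr
    have hper : ∀ u : V,
        min (fit r p.1 u) (fit r p.2 u) /
            (lam r * (Fintype.card V : ℝ) * ((N E u).card : ℝ)) *
            ∑ _v ∈ N E u, (1:ℝ)
          + |fit r p.1 u - fit r p.2 u| /
            (lam r * (Fintype.card V : ℝ) * ((N E u).card : ℝ)) *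
            ∑ _v ∈ N E u, (1:ℝ)
          + (lam r - max (fit r p.1 u) (fit r p.2 u)) /
            (lam r * (Fintype.card V : ℝ))
        = 1 / (Fintype.card V : ℝ) := by
      intro u
      have hd : (0:ℝ) < ((N E u).card : ℝ) := dpos hE u
      rw [Finset.sum_const, nsmul_eq_mul, mul_one]
      -- note: two sums of ones
      rcases le_total (fit r p.1 u) (fit r p.2 u) with hab | hab
      · rw [min_eq_left hab, max_eq_right hab, abs_of_nonpos (sub_nonpos.2 hab),
          neg_sub]
        field_simp
        ring
      · rw [min_eq_right hab, max_eq_left hab, abs_of_nonneg (sub_nonneg.2 hab)]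
        field_simp
        ring
    rw [Finset.sum_congr rfl (fun u _ => hper u), Finset.sum_const, card_univ,
      nsmul_eq_mul, mul_one_div, div_self hn.ne']
  · simp only [Qp, if_neg hsub]
    simp [ind, Finset.sum_ite_eq']

lemma Qp_zero {r : ℝ} {p q : Finset V × Finset V} (hsub : p.1 ⊆ p.2)
    (hq : ¬ q.1 ⊆ q.2) : Qp E r p q = 0 := by
  unfold Qp
  rw [if_pos hsub]
  apply Finset.sum_eq_zero
  intro u _
  have h1 : ∑ v ∈ N E u, ind (tBoth u v p) q = 0 := by
    apply Finset.sum_eq_zero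
    intro v _
    unfold ind
    rw [if_neg]
    intro hqe
    exact hq (hqe ▸ move_subset hsub u v)
  have h3 : ind p q = 0 := by
    unfold ind
    rw [if_neg]
    intro hqe
    exact hq (hqe ▸ hsub)
  by_cases hfe : fit r p.1 u = fit r p.2 u
  · rw [h1, h3, hfe, sub_self, abs_zero]
    ring
  · have hu1 : u ∉ p.1 := by
      intro h
      exact hfe (by simp [fit, h, hsub h])
    have hu2 : u ∈ p.2 := by
      by_contra h
      exact hfe (by simp [fit, hu1, h])
    have h2 : ∑ v ∈ N E u, ind (tExtra r u v p) q = 0 := by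
      apply Finset.sum_eq_zero
      intro v _
      unfold ind
      rw [if_neg]
      intro hqe
      apply hq
      rw [hqe]
      unfold tExtra
      split
      · show p.1 ⊆ move u v p.2
        simp only [move, if_pos hu2]
        exact hsub.trans (Finset.subset_insert v p.2)
      · show move u v p.1 ⊆ p.2
        simp only [move, if_neg hu1]
        exact (Finset.erase_subset v p.1).trans hsub
    rw [h1, h2, h3]
    ring

end Pair2

section Pair3
variable [Nonempty V]

lemma Qp_marg2 (hE : ∀ u : V, ∃ v, E u v) {r : ℝ} (hr : 0 < r)
    {p : Finset V × Finset V} (hsub : p.1 ⊆ p.2)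
    (f : Finset V → ℝ) (hharm : ∀ A, Pex E r A f = f A) :
    ∑ q : Finset V × Finset V, Qp E r p q * f q.2 = f p.2 := by
  have h := Qp_expand (E := E) (r := r) hsub (fun q => f q.2)
  rw [h]
  have hn : (0:ℝ) < (Fintype.card V : ℝ) := npos
  have hl : (0:ℝ) < lam r := lam_pos hr
  have hW : (0:ℝ) < W r p.2 := W_pos hr p.2
  have hper : ∀ u : V,
      min (fit r p.1 u) (fit r p.2 u) /
          (lam r * (Fintype.card V : ℝ) * ((N E u).card : ℝ)) *
          ∑ v ∈ N E u, f (tBoth u v p).2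
        + |fit r p.1 u - fit r p.2 u| /
          (lam r * (Fintype.card V : ℝ) * ((N E u).card : ℝ)) *
          ∑ v ∈ N E u, f (tExtra r u v p).2
        + (lam r - max (fit r p.1 u) (fit r p.2 u)) /
          (lam r * (Fintype.card V : ℝ)) * f p.2
      = fit r p.2 u / (lam r * (Fintype.card V : ℝ) * ((N E u).card : ℝ)) *
          ∑ v ∈ N E u, f (move u v p.2)
        + (lam r - fit r p.2 u) / (lam r * (Fintype.card V : ℝ)) * f p.2 := by
    intro u
    have hd : (0:ℝ) < ((N E u).card : ℝ) := dpos hE u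
    have hB : ∀ v : V, (tBoth u v p).2 = move u v p.2 := fun v => rfl
    by_cases hab : fit r p.1 u ≤ fit r p.2 u
    · have hX : ∀ v : V, (tExtra r u v p).2 = move u v p.2 := fun v => by
        unfold tExtra; rw [if_pos hab]
      simp only [hB, hX]
      rw [min_eq_left hab, max_eq_right hab, abs_of_nonpos (sub_nonpos.2 hab),
        neg_sub]
      ring
    · have hab' := le_of_not_ge hab
      have hX : ∀ v : V, (tExtra r u v p).2 = p.2 := fun v => by
        unfold tExtra; rw [if_neg hab]
      simp only [hB, hX]
      rw [min_eq_right hab', max_eq_left hab', abs_of_nonneg (sub_nonneg.2 hab'),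
        Finset.sum_const, nsmul_eq_mul]
      field_simp
      ring
  rw [Finset.sum_congr rfl (fun u _ => hper u), Finset.sum_add_distrib]
  have hfirst : ∑ u : V, fit r p.2 u /
      (lam r * (Fintype.card V : ℝ) * ((N E u).card : ℝ)) *
      ∑ v ∈ N E u, f (move u v p.2)
      = (W r p.2 / (lam r * (Fintype.card V : ℝ))) * f p.2 := by
    have hPex := hharm p.2
    unfold Pex at hPex
    rw [← hPex, Finset.mul_sum]
    refine Finset.sum_congr rfl fun u _ => ?_
    have hd : (0:ℝ) < ((N E u).card : ℝ) := dpos hE u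
    rw [Finset.mul_sum, Finset.mul_sum]
    refine Finset.sum_congr rfl fun v _ => ?_
    rw [← mul_assoc]
    congr 1
    field_simp
  have hsecond : ∑ u : V, (lam r - fit r p.2 u) /
      (lam r * (Fintype.card V : ℝ)) * f p.2
      = ((lam r * (Fintype.card V : ℝ) - W r p.2) /
          (lam r * (Fintype.card V : ℝ))) * f p.2 := by
    rw [← Finset.sum_mul]
    congr 1
    rw [← Finset.sum_div, Finset.sum_sub_distrib, Finset.sum_const, card_univ,
      nsmul_eq_mul, ← W_eq_sum]
    ring_nf
  rw [hfirst, hsecond]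
  field_simp
  ring

lemma Qp_marg1 (hE : ∀ u : V, ∃ v, E u v) {r : ℝ} (hr : 0 < r)
    {p : Finset V × Finset V} (hsub : p.1 ⊆ p.2)
    (f : Finset V → ℝ) (hharm : ∀ A, Pex E r A f = f A) :
    ∑ q : Finset V × Finset V, Qp E r p q * f q.1 = f p.1 := by
  have h := Qp_expand (E := E) (r := r) hsub (fun q => f q.1)
  rw [h]
  have hn : (0:ℝ) < (Fintype.card V : ℝ) := npos
  have hl : (0:ℝ) < lam r := lam_pos hr
  have hW : (0:ℝ) < W r p.1 := W_pos hr p.1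
  have hper : ∀ u : V,
      min (fit r p.1 u) (fit r p.2 u) /
          (lam r * (Fintype.card V : ℝ) * ((N E u).card : ℝ)) *
          ∑ v ∈ N E u, f (tBoth u v p).1
        + |fit r p.1 u - fit r p.2 u| /
          (lam r * (Fintype.card V : ℝ) * ((N E u).card : ℝ)) *
          ∑ v ∈ N E u, f (tExtra r u v p).1
        + (lam r - max (fit r p.1 u) (fit r p.2 u)) /
          (lam r * (Fintype.card V : ℝ)) * f p.1
      = fit r p.1 u / (lam r * (Fintype.card V : ℝ) * ((N E u).card : ℝ)) *
          ∑ v ∈ N E u, f (move u v p.1)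
        + (lam r - fit r p.1 u) / (lam r * (Fintype.card V : ℝ)) * f p.1 := by
    intro u
    have hd : (0:ℝ) < ((N E u).card : ℝ) := dpos hE u
    have hB : ∀ v : V, (tBoth u v p).1 = move u v p.1 := fun v => rfl
    by_cases hab : fit r p.1 u ≤ fit r p.2 u
    · have hX : ∀ v : V, (tExtra r u v p).1 = p.1 := fun v => by
        unfold tExtra; rw [if_pos hab]
      simp only [hB, hX]
      rw [min_eq_left hab, max_eq_right hab, abs_of_nonpos (sub_nonpos.2 hab),
        neg_sub, Finset.sum_const, nsmul_eq_mul]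
      field_simp
      ring
    · have hab' := le_of_not_ge hab
      have hX : ∀ v : V, (tExtra r u v p).1 = move u v p.1 := fun v => by
        unfold tExtra; rw [if_neg hab]
      simp only [hB, hX]
      rw [min_eq_right hab', max_eq_left hab', abs_of_nonneg (sub_nonneg.2 hab')]
      ring
  rw [Finset.sum_congr rfl (fun u _ => hper u), Finset.sum_add_distrib]
  have hfirst : ∑ u : V, fit r p.1 u /
      (lam r * (Fintype.card V : ℝ) * ((N E u).card : ℝ)) *
      ∑ v ∈ N E u, f (move u v p.1)
      = (W r p.1 / (lam r * (Fintype.card V : ℝ))) * f p.1 := by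
    have hPex := hharm p.1
    unfold Pex at hPex
    rw [← hPex, Finset.mul_sum]
    refine Finset.sum_congr rfl fun u _ => ?_
    have hd : (0:ℝ) < ((N E u).card : ℝ) := dpos hE u
    rw [Finset.mul_sum, Finset.mul_sum]
    refine Finset.sum_congr rfl fun v _ => ?_
    rw [← mul_assoc]
    congr 1
    field_simp
  have hsecond : ∑ u : V, (lam r - fit r p.1 u) /
      (lam r * (Fintype.card V : ℝ)) * f p.1
      = ((lam r * (Fintype.card V : ℝ) - W r p.1) /
          (lam r * (Fintype.card V : ℝ))) * f p.1 := by
    rw [← Finset.sum_mul]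
    congr 1
    rw [← Finset.sum_div, Finset.sum_sub_distrib, Finset.sum_const, card_univ,
      nsmul_eq_mul, ← W_eq_sum]
    ring_nf
  rw [hfirst, hsecond]
  field_simp
  ring

end Pair3

section Pair4
variable [Nonempty V]

lemma Qp_term_nonneg {r : ℝ} (hr : 0 < r) (p q : Finset V × Finset V) (u : V) :
    0 ≤ min (fit r p.1 u) (fit r p.2 u) /
          (lam r * (Fintype.card V : ℝ) * ((N E u).card : ℝ)) *
          ∑ v ∈ N E u, ind (tBoth u v p) q
        + |fit r p.1 u - fit r p.2 u| /
          (lam r * (Fintype.card V : ℝ) * ((N E u).card : ℝ)) *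
          ∑ v ∈ N E u, ind (tExtra r u v p) q
        + (lam r - max (fit r p.1 u) (fit r p.2 u)) /
          (lam r * (Fintype.card V : ℝ)) * ind p q := by
  have h1 : (0:ℝ) ≤ min (fit r p.1 u) (fit r p.2 u) :=
    le_min (fit_pos hr p.1 u).le (fit_pos hr p.2 u).le
  have h2 : (0:ℝ) ≤ lam r * (Fintype.card V : ℝ) * ((N E u).card : ℝ) := by
    have := lam_pos hr
    positivity
  have h3 : (0:ℝ) ≤ lam r * (Fintype.card V : ℝ) := by
    have := lam_pos hr
    positivity
  have h4 : (0:ℝ) ≤ lam r - max (fit r p.1 u) (fit r p.2 u) :=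
    sub_nonneg.2 (max_le (fit_le_lam p.1 u) (fit_le_lam p.2 u))
  have h5 : (0:ℝ) ≤ ∑ v ∈ N E u, ind (tBoth u v p) q :=
    Finset.sum_nonneg fun v _ => ind_nonneg _ _
  have h6 : (0:ℝ) ≤ ∑ v ∈ N E u, ind (tExtra r u v p) q :=
    Finset.sum_nonneg fun v _ => ind_nonneg _ _
  have h7 := ind_nonneg p q
  positivity

lemma Qp_pos (hE : ∀ u : V, ∃ v, E u v) {r : ℝ} (hr : 0 < r)
    {p : Finset V × Finset V} (hsub : p.1 ⊆ p.2) {u v : V} (he : E u v) :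
    0 < Qp E r p (tBoth u v p) := by
  unfold Qp
  rw [if_pos hsub]
  apply Finset.sum_pos' (fun u' _ => Qp_term_nonneg hr p (tBoth u v p) u')
  refine ⟨u, mem_univ u, ?_⟩
  have hn : (0:ℝ) < (Fintype.card V : ℝ) := npos
  have hl : (0:ℝ) < lam r := lam_pos hr
  have hd : (0:ℝ) < ((N E u).card : ℝ) := dpos hE u
  have hmin : (0:ℝ) < min (fit r p.1 u) (fit r p.2 u) :=
    lt_min (fit_pos hr p.1 u) (fit_pos hr p.2 u)
  have hS : (1:ℝ) ≤ ∑ v' ∈ N E u, ind (tBoth u v' p) (tBoth u v p) := by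
    have hv : v ∈ N E u := by simp [N, he]
    have := Finset.single_le_sum
      (f := fun v' => ind (tBoth u v' p) (tBoth u v p))
      (fun v' _ => ind_nonneg _ _) hv
    simpa [ind] using this
  have ht1 : 0 < min (fit r p.1 u) (fit r p.2 u) /
      (lam r * (Fintype.card V : ℝ) * ((N E u).card : ℝ)) *
      ∑ v' ∈ N E u, ind (tBoth u v' p) (tBoth u v p) := by
    apply mul_pos (div_pos hmin (by positivity))
    linarith
  have ht2 : (0:ℝ) ≤ |fit r p.1 u - fit r p.2 u| /
      (lam r * (Fintype.card V : ℝ) * ((N E u).card : ℝ)) *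
      ∑ v' ∈ N E u, ind (tExtra r u v' p) (tBoth u v p) := by
    apply mul_nonneg (div_nonneg (abs_nonneg _) (by positivity))
    exact Finset.sum_nonneg fun v' _ => ind_nonneg _ _
  have ht3 : (0:ℝ) ≤ (lam r - max (fit r p.1 u) (fit r p.2 u)) /
      (lam r * (Fintype.card V : ℝ)) * ind p (tBoth u v p) := by
    apply mul_nonneg (div_nonneg
      (sub_nonneg.2 (max_le (fit_le_lam p.1 u) (fit_le_lam p.2 u)))
      (by positivity))
    exact ind_nonneg _ _
  linarith

lemma pair_reach (hE : ∀ u : V, ∃ v, E u v)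
    (hstrong : ∀ u v : V, Relation.ReflTransGen E u v) {r : ℝ} (hr : 0 < r) :
    ∀ p : Finset V × Finset V, p.1 ⊆ p.2 → p.2.Nonempty →
      ∃ q : Finset V × Finset V, q.2 = univ ∧
        Relation.ReflTransGen (fun a b => 0 < Qp E r a b) p q := by
  have key : ∀ k : ℕ, ∀ p : Finset V × Finset V, p.1 ⊆ p.2 → p.2.Nonempty →
      p.2ᶜ.card ≤ k →
      ∃ q : Finset V × Finset V, q.2 = univ ∧
        Relation.ReflTransGen (fun a b => 0 < Qp E r a b) p q := by
    intro k
    induction k with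
    | zero =>
      intro p _ _ hc
      have h1 : p.2ᶜ = ∅ := Finset.card_eq_zero.1 (Nat.le_zero.1 hc)
      have h2 : p.2 = univ := by rwa [Finset.compl_eq_empty_iff] at h1
      exact ⟨p, h2, Relation.ReflTransGen.refl⟩
    | succ k ih =>
      intro p hsub hne hc
      by_cases h2 : p.2 = univ
      · exact ⟨p, h2, Relation.ReflTransGen.refl⟩
      obtain ⟨u, hu, v, hv, he⟩ := cross hstrong hne h2
      have hstep : 0 < Qp E r p (tBoth u v p) := Qp_pos hE hr hsub he
      have hmv : move u v p.2 = insert v p.2 := if_pos hu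
      have hsub' : (tBoth u v p).1 ⊆ (tBoth u v p).2 := move_subset hsub u v
      have hne' : (tBoth u v p).2.Nonempty := by
        show (move u v p.2).Nonempty
        rw [hmv]
        exact ⟨v, Finset.mem_insert_self v p.2⟩
      have hcard : (tBoth u v p).2ᶜ.card ≤ k := by
        show (move u v p.2)ᶜ.card ≤ k
        rw [hmv]
        have hss : (insert v p.2)ᶜ ⊂ p.2ᶜ := by
          apply Finset.ssubset_iff_of_subset (Finset.compl_subset_compl.2
            (Finset.subset_insert v p.2)) |>.2
          exact ⟨v, by simp [hv], by simp⟩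
        have := Finset.card_lt_card hss
        omega
      obtain ⟨q, hq, hrtg⟩ := ih (tBoth u v p) hsub' hne' hcard
      exact ⟨q, hq, Relation.ReflTransGen.head hstep hrtg⟩
  exact fun p hsub hne => key p.2ᶜ.card p hsub hne le_rfl

lemma f_mono (hE : ∀ u : V, ∃ v, E u v)
    (hstrong : ∀ u v : V, Relation.ReflTransGen E u v) {r : ℝ} (hr : 0 < r)
    (f : Finset V → ℝ) (hf1 : f univ = 1) (hf0 : f ∅ = 0)
    (hfrec : ∀ A : Finset V, A ≠ ∅ → A ≠ univ →
      f A = ∑ B : Finset V, moranP E r A B * f B) :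
    ∀ A B : Finset V, A ⊆ B → f A ≤ f B := by
  have hharm := harm_all hE hr f hf1 hf0 hfrec
  have hle1 := f_le_one hE hstrong hr f hf1 hf0 hfrec
  set h : Finset V × Finset V → ℝ :=
    fun p => if p.1 ⊆ p.2 then f p.2 - f p.1 else 0 with hh
  have key := minprin (Qp E r) (fun p q => Qp_nonneg hr p q) (Qp_row hE hr) h
    (by
      intro p
      by_cases hsub : p.1 ⊆ p.2
      · have he1 : ∑ q : Finset V × Finset V, Qp E r p q * h q
            = ∑ q : Finset V × Finset V, Qp E r p q * (f q.2 - f q.1) := by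
          refine Finset.sum_congr rfl fun q _ => ?_
          by_cases hq : q.1 ⊆ q.2
          · rw [hh]
            simp only [if_pos hq]
          · rw [Qp_zero hsub hq, zero_mul, zero_mul]
        rw [he1]
        simp only [mul_sub]
        rw [Finset.sum_sub_distrib, Qp_marg2 hE hr hsub f hharm,
          Qp_marg1 hE hr hsub f hharm]
        exact le_of_eq (by rw [hh]; simp only [if_pos hsub])
      · have hQ : ∀ q : Finset V × Finset V, Qp E r p q = ind p q := fun q => by
          unfold Qp; rw [if_neg hsub]
        rw [Finset.sum_congr rfl (fun q _ => by rw [hQ q])]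
        simp [ind, ite_mul, Finset.sum_ite_eq'])
    (fun p => p.2 = univ ∨ p.1 = p.2 ∨ ¬ p.1 ⊆ p.2)
    (by
      rintro p (h2 | h12 | hns)
      · by_cases hsub : p.1 ⊆ p.2
        · rw [hh]
          simp only [h2, hf1]
          rw [if_pos (Finset.subset_univ p.1)]
          linarith [hle1 p.1]
        · simp [hh, hsub]
      · simp [hh, h12]
      · simp [hh, hns])
    (by
      intro p
      by_cases hsub : p.1 ⊆ p.2
      · by_cases hB : p.2 = ∅
        · have h12 : p.1 = p.2 := by
            rw [hB] at hsub ⊢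
            exact Finset.subset_empty.1 hsub
          exact ⟨p, Or.inr (Or.inl h12), Relation.ReflTransGen.refl⟩
        · obtain ⟨q, hq, hrtg⟩ := pair_reach hE hstrong hr p hsub
            (Finset.nonempty_iff_ne_empty.2 hB)
          exact ⟨q, Or.inl hq, hrtg⟩
      · exact ⟨p, Or.inr (Or.inr hsub), Relation.ReflTransGen.refl⟩)
  intro A B hAB
  have hk := key (A, B)
  rw [hh] at hk
  simp only [if_pos hAB] at hk
  linarith

end Pair4

section FitMono
variable [Nonempty V]

lemma Pex_mono (hE : ∀ u : V, ∃ v, E u v) {r r' : ℝ} (hr : 0 < r) (hr' : 0 < r')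
    (hrr : r ≤ r') (f : Finset V → ℝ)
    (hmono : ∀ A B : Finset V, A ⊆ B → f A ≤ f B) (A : Finset V) :
    Pex E r A f ≤ Pex E r' A f := by
  set Sp := ∑ u ∈ A, (1 / ((N E u).card : ℝ)) * ∑ v ∈ N E u, f (move u v A) with hSp
  set Sm := ∑ u ∈ Aᶜ, (1 / ((N E u).card : ℝ)) * ∑ v ∈ N E u, f (move u v A) with hSm
  have hsplit : ∀ ρ : ℝ, 0 < ρ → Pex E ρ A f = (ρ * Sp + Sm) / W ρ A := by
    intro ρ hρ
    unfold Pex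
    rw [← Finset.sum_add_sum_compl A]
    have hA : ∑ u ∈ A, ∑ v ∈ N E u,
        fit ρ A u / (W ρ A * ((N E u).card : ℝ)) * f (move u v A)
        = (ρ / W ρ A) * Sp := by
      rw [hSp, Finset.mul_sum]
      refine Finset.sum_congr rfl fun u hu => ?_
      rw [Finset.mul_sum, Finset.mul_sum]
      refine Finset.sum_congr rfl fun v _ => ?_
      rw [show fit ρ A u = ρ from if_pos hu]
      have hd := dpos hE u
      have hW := W_pos hρ A
      field_simp
    have hAc : ∑ u ∈ Aᶜ, ∑ v ∈ N E u,
        fit ρ A u / (W ρ A * ((N E u).card : ℝ)) * f (move u v A)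
        = (1 / W ρ A) * Sm := by
      rw [hSm, Finset.mul_sum]
      refine Finset.sum_congr rfl fun u hu => ?_
      rw [Finset.mul_sum, Finset.mul_sum]
      refine Finset.sum_congr rfl fun v _ => ?_
      rw [show fit ρ A u = 1 from if_neg (Finset.mem_compl.1 hu)]
      have hd := dpos hE u
      have hW := W_pos hρ A
      field_simp
    rw [hA, hAc]
    have hW := W_pos hρ A
    field_simp
  have hSp_ge : (A.card : ℝ) * f A ≤ Sp := by
    rw [hSp]
    have hterm : ∀ u ∈ A, f A ≤ (1 / ((N E u).card : ℝ)) *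
        ∑ v ∈ N E u, f (move u v A) := by
      intro u hu
      have hd := dpos hE u
      have hsum : ((N E u).card : ℝ) * f A ≤ ∑ v ∈ N E u, f (move u v A) := by
        have hle := Finset.sum_le_sum (f := fun _ : V => f A)
          (g := fun v => f (move u v A)) (s := N E u)
          (fun v _ => hmono A (move u v A) (by
            unfold move
            rw [if_pos hu]
            exact Finset.subset_insert v A))
        rwa [Finset.sum_const, nsmul_eq_mul] at hle
      calc f A = (1 / ((N E u).card : ℝ)) * (((N E u).card : ℝ) * f A) := by
            field_simp
        _ ≤ _ := mul_le_mul_of_nonneg_left hsum (by positivity)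
    calc (A.card : ℝ) * f A = ∑ _u ∈ A, f A := by
          rw [Finset.sum_const, nsmul_eq_mul]
      _ ≤ _ := Finset.sum_le_sum hterm
  have hSm_le : Sm ≤ (Aᶜ.card : ℝ) * f A := by
    rw [hSm]
    have hterm : ∀ u ∈ Aᶜ, (1 / ((N E u).card : ℝ)) *
        ∑ v ∈ N E u, f (move u v A) ≤ f A := by
      intro u hu
      have hd := dpos hE u
      have hsum : ∑ v ∈ N E u, f (move u v A) ≤ ((N E u).card : ℝ) * f A := by
        have hle := Finset.sum_le_sum (f := fun v => f (move u v A))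
          (g := fun _ : V => f A) (s := N E u)
          (fun v _ => hmono (move u v A) A (by
            unfold move
            rw [if_neg (Finset.mem_compl.1 hu)]
            exact Finset.erase_subset v A))
        rwa [Finset.sum_const, nsmul_eq_mul] at hle
      calc (1 / ((N E u).card : ℝ)) * ∑ v ∈ N E u, f (move u v A)
          ≤ (1 / ((N E u).card : ℝ)) * (((N E u).card : ℝ) * f A) :=
            mul_le_mul_of_nonneg_left hsum (by positivity)
        _ = f A := by field_simp
    calc ∑ u ∈ Aᶜ, (1 / ((N E u).card : ℝ)) * ∑ v ∈ N E u, f (move u v A)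
        ≤ ∑ _u ∈ Aᶜ, f A := Finset.sum_le_sum hterm
      _ = (Aᶜ.card : ℝ) * f A := by rw [Finset.sum_const, nsmul_eq_mul]
  have hk : (A.card : ℝ) + (Aᶜ.card : ℝ) = (Fintype.card V : ℝ) := by
    rw [← Nat.cast_add]
    norm_cast
    rw [Finset.card_add_card_compl]
  rw [hsplit r hr, hsplit r' hr', div_le_div_iff₀ (W_pos hr A) (W_pos hr' A)]
  have hkey : 0 ≤ (Aᶜ.card : ℝ) * Sp - (A.card : ℝ) * Sm := by
    have h1 : (A.card : ℝ) * Sm ≤ (A.card : ℝ) * ((Aᶜ.card : ℝ) * f A) :=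
      mul_le_mul_of_nonneg_left hSm_le (by positivity)
    have h2 : (Aᶜ.card : ℝ) * ((A.card : ℝ) * f A) ≤ (Aᶜ.card : ℝ) * Sp :=
      mul_le_mul_of_nonneg_left hSp_ge (by positivity)
    have h3 : (Aᶜ.card : ℝ) * ((A.card : ℝ) * f A)
        = (A.card : ℝ) * ((Aᶜ.card : ℝ) * f A) := by ring
    linarith
  unfold W
  have hc2 : (Fintype.card V : ℝ) - (A.card : ℝ) = (Aᶜ.card : ℝ) := by linarith
  have hident : (r' * Sp + Sm) * ((Fintype.card V : ℝ) + (r - 1) * A.card)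
      - (r * Sp + Sm) * ((Fintype.card V : ℝ) + (r' - 1) * A.card)
      = (r' - r) * (((Fintype.card V : ℝ) - (A.card : ℝ)) * Sp
          - (A.card : ℝ) * Sm) := by ring
  have hfin : 0 ≤ (r' - r) * (((Fintype.card V : ℝ) - (A.card : ℝ)) * Sp
      - (A.card : ℝ) * Sm) := by
    rw [hc2]
    exact mul_nonneg (by linarith) hkey
  linarith

end FitMono

end MoranAux

open MoranAux in
/-- Monotonicity of the overall fixation probability
`f_{G,r} = (1/|V|)·Σ_v f_{G,r}({v})` in the mutant fitness `r`, for any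
strongly connected digraph `G`: if `0 < r ≤ r'` then `f_{G,r} ≤ f_{G,r'}`.
The fixation probabilities `f` (for fitness `r`) and `g` (for fitness `r'`)
are characterized as the solutions of the harmonic one-step recurrence with
boundary values `1` at the all-mutant state and `0` at the empty state. -/
theorem stmt_16 {V : Type*} [Fintype V] [DecidableEq V] [Nonempty V]
    (E : V → V → Prop) [DecidableRel E]
    (hstrong : ∀ u v : V, Relation.ReflTransGen E u v)
    (r r' : ℝ) (hr : 0 < r) (hrr : r ≤ r')
    (f g : Finset V → ℝ)
    (hf1 : f univ = 1) (hf0 : f ∅ = 0)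
    (hfrec : ∀ A : Finset V, A ≠ ∅ → A ≠ univ →
      f A = ∑ B : Finset V, moranP E r A B * f B)
    (hg1 : g univ = 1) (hg0 : g ∅ = 0)
    (hgrec : ∀ A : Finset V, A ≠ ∅ → A ≠ univ →
      g A = ∑ B : Finset V, moranP E r' A B * g B) :
    (1 / (Fintype.card V : ℝ)) * ∑ v : V, f {v} ≤
      (1 / (Fintype.card V : ℝ)) * ∑ v : V, g {v} := by
  by_cases hcard : Fintype.card V = 1
  · have huniv : ∀ v : V, ({v} : Finset V) = univ := by
      intro v
      apply Finset.eq_univ_of_card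
      rw [Finset.card_singleton, hcard]
    simp only [huniv, hf1, hg1]
    exact le_refl _
  · have hlt : 1 < Fintype.card V := by
      have := Fintype.card_pos (α := V)
      omega
    have hE : ∀ u : V, ∃ v, E u v := by
      intro u
      obtain ⟨w, hw⟩ := Fintype.exists_ne_of_one_lt_card hlt u
      rcases (Relation.ReflTransGen.cases_head (hstrong u w)) with heq | ⟨c, hc, _⟩
      · exact absurd heq.symm hw
      · exact ⟨c, hc⟩
    have hr' : 0 < r' := lt_of_lt_of_le hr hrr
    have hmono := f_mono hE hstrong hr f hf1 hf0 hfrec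
    have hharmf := harm_all hE hr f hf1 hf0 hfrec
    have hharmg := harm_all hE hr' g hg1 hg0 hgrec
    have key := minprin (moranP E r') (fun A B => moranP_nonneg hr' A B)
      (Qrow hE hr') (fun A => g A - f A)
      (by
        intro A
        show ∑ B : Finset V, moranP E r' A B * (g B - f B) ≤ g A - f A
        simp only [mul_sub]
        rw [Finset.sum_sub_distrib, expval r' A g, expval r' A f, hharmg A]
        have h1 : Pex E r A f ≤ Pex E r' A f := Pex_mono hE hr hr' hrr f hmono A
        have h2 := hharmf A
        linarith)
      (fun A => A = ∅ ∨ A = univ)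
      (by
        rintro A (rfl | rfl)
        · simp [hf0, hg0]
        · simp [hf1, hg1])
      (by
        intro A
        by_cases hA : A = ∅
        · exact ⟨∅, Or.inl rfl, by rw [hA]⟩
        · exact ⟨univ, Or.inr rfl,
            reach_univ hstrong hr' A (Finset.nonempty_iff_ne_empty.2 hA)⟩)
    apply mul_le_mul_of_nonneg_left _ (by positivity)
    apply Finset.sum_le_sum
    intro v _
    have hv := key {v}
    linarith
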